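/- Assume A, B, D have real entries with A = Aᵀ and D = Dᵀ. Let z ∈ ℂ with |z| = 1, and suppose (z+z⁻¹)·1_M − D is invertible and Q(z) and Q(z⁻¹) are invertible. Then the single-particle S-matrix 𝕊(z) := −Q(z⁻¹)·Q(z)⁻¹ is unitary: 𝕊(z)† · 𝕊(z) = 1_N. -/

import Mathlib

open Matrix

/-- `F(z) := A + B† ((z+z⁻¹)·1_M − D)⁻¹ B`. -/
noncomputable def Fmat {N M : ℕ} (A : Matrix (Fin N) (Fin N) ℂ)
    (B : Matrix (Fin M) (Fin N) ℂ) (D : Matrix (Fin M) (Fin M) ℂ) (z : ℂ) :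
    Matrix (Fin N) (Fin N) ℂ :=
  A + Bᴴ * ((z + z⁻¹) • (1 : Matrix (Fin M) (Fin M) ℂ) - D)⁻¹ * B

/-- `Q(z) := 1_N − z·F(z)`. -/
noncomputable def Qmat {N M : ℕ} (A : Matrix (Fin N) (Fin N) ℂ)
    (B : Matrix (Fin M) (Fin N) ℂ) (D : Matrix (Fin M) (Fin M) ℂ) (z : ℂ) :
    Matrix (Fin N) (Fin N) ℂ :=
  1 - z • Fmat A B D z

/-- `𝕊(z) := −Q(z⁻¹)·Q(z)⁻¹`. -/
noncomputable def Smat {N M : ℕ} (A : Matrix (Fin N) (Fin N) ℂ)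
    (B : Matrix (Fin M) (Fin N) ℂ) (D : Matrix (Fin M) (Fin M) ℂ) (z : ℂ) :
    Matrix (Fin N) (Fin N) ℂ :=
  -(Qmat A B D z⁻¹) * (Qmat A B D z)⁻¹

lemma real_sym_conjTranspose {n : ℕ} (X : Matrix (Fin n) (Fin n) ℂ)
    (hre : ∀ i j, (X i j).im = 0) (hsym : Xᵀ = X) : Xᴴ = X := by
  ext i j
  have h1 := congrFun (congrFun hsym i) j
  simp only [Matrix.conjTranspose_apply, Matrix.transpose_apply] at h1 ⊢
  rw [show star (X j i) = (starRingEnd ℂ) (X j i) from rfl,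
    Complex.conj_eq_iff_im.mpr (hre j i), h1]

/-- for real symmetric blocks `A`, `D` and real `B`, and `|z| = 1`
with the relevant matrices invertible, the S-matrix `𝕊(z) = −Q(z⁻¹)Q(z)⁻¹` is
unitary: `𝕊(z)† 𝕊(z) = 1_N`. -/
theorem single_particle_S_matrix_unitary {N M : ℕ} (hN : 0 < N) (hM : 0 < M)
    (A : Matrix (Fin N) (Fin N) ℂ) (B : Matrix (Fin M) (Fin N) ℂ)
    (D : Matrix (Fin M) (Fin M) ℂ)
    (hAre : ∀ i j, (A i j).im = 0) (hBre : ∀ i j, (B i j).im = 0)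
    (hDre : ∀ i j, (D i j).im = 0)
    (hAsym : Aᵀ = A) (hDsym : Dᵀ = D)
    (z : ℂ) (habs : ‖z‖ = 1)
    (hD : IsUnit ((z + z⁻¹) • (1 : Matrix (Fin M) (Fin M) ℂ) - D))
    (hQ : IsUnit (Qmat A B D z)) (hQ' : IsUnit (Qmat A B D z⁻¹)) :
    (Smat A B D z)ᴴ * Smat A B D z = 1 := by
  have hz : z ≠ 0 := by
    intro h; rw [h] at habs; simp at habs
  have hconj : star z = z⁻¹ := (Complex.inv_eq_conj habs).symm
  have hE : star (z + z⁻¹) = z + z⁻¹ := by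
    rw [star_add, hconj, star_inv₀, hconj, inv_inv, add_comm]
  have hAH : Aᴴ = A := real_sym_conjTranspose A hAre hAsym
  have hDH : Dᴴ = D := real_sym_conjTranspose D hDre hDsym
  have hBH : Bᴴᴴ = B := Matrix.conjTranspose_conjTranspose B
  have hGH : ((z + z⁻¹) • (1 : Matrix (Fin M) (Fin M) ℂ) - D)ᴴ
      = (z + z⁻¹) • (1 : Matrix (Fin M) (Fin M) ℂ) - D := by
    rw [Matrix.conjTranspose_sub, hDH, Matrix.conjTranspose_smul,
      Matrix.conjTranspose_one, hE]
  set F := Fmat A B D z with hF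
  have hFH : Fᴴ = F := by
    rw [hF, Fmat, Matrix.conjTranspose_add, hAH, Matrix.conjTranspose_mul,
      Matrix.conjTranspose_mul, Matrix.conjTranspose_nonsing_inv, hGH, hBH,
      ← Matrix.mul_assoc]
  have hFinv : Fmat A B D z⁻¹ = F := by
    rw [hF, Fmat, Fmat, inv_inv, add_comm z⁻¹ z]
  have hQH : (Qmat A B D z)ᴴ = Qmat A B D z⁻¹ := by
    rw [Qmat, Qmat, hFinv, Matrix.conjTranspose_sub, Matrix.conjTranspose_one,
      Matrix.conjTranspose_smul, hFH, hconj]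
  have hQ'H : (Qmat A B D z⁻¹)ᴴ = Qmat A B D z := by
    rw [← hQH, Matrix.conjTranspose_conjTranspose]
  set P := Qmat A B D z with hP
  set P' := Qmat A B D z⁻¹ with hP'
  have hcomm : P * P' = P' * P := by
    have e : ∀ a b : ℂ, (1 - a • F) * (1 - b • F)
        = 1 - a • F - b • F + (a * b) • (F * F) := by
      intro a b
      simp only [Matrix.sub_mul, Matrix.mul_sub, Matrix.mul_one,
        Matrix.one_mul, Matrix.smul_mul, Matrix.mul_smul, smul_smul, smul_sub,
        mul_comm b a]
      abel
    rw [hP, hP', Qmat, Qmat, hFinv, ← hF, e, e, mul_comm]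
    abel
  have hPdet : IsUnit P.det := (Matrix.isUnit_iff_isUnit_det _).mp hQ
  have hP'det : IsUnit P'.det := (Matrix.isUnit_iff_isUnit_det _).mp hQ'
  rw [Smat, ← hP, ← hP', Matrix.conjTranspose_mul, Matrix.conjTranspose_neg,
    hQ'H, Matrix.conjTranspose_nonsing_inv, hQH]
  calc P'⁻¹ * -P * (-P' * P⁻¹) = P'⁻¹ * (P * P') * P⁻¹ := by
        simp [Matrix.mul_assoc, Matrix.neg_mul, Matrix.mul_neg]
    _ = P'⁻¹ * P' * (P * P⁻¹) := by rw [hcomm]; simp [Matrix.mul_assoc]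
    _ = 1 := by rw [Matrix.nonsing_inv_mul _ hP'det,
        Matrix.mul_nonsing_inv _ hPdet, Matrix.one_mul]
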